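/- Single-qubit QSP characterization: For complex polynomials P, Q there exist unitaries A_0, …, A_n ∈ SU(2) such that A_n W A_{n−1} W ⋯ W A_0 e_0 = (P(z), Q(z))ᵀ for all z on the unit circle, where W = diag(1, z), if and only if (i) deg P, deg Q ≤ n and (ii) |P(z)|² + |Q(z)|² = 1 for every z with |z| = 1. -/

import Mathlib

open Matrix Polynomial

/-- The QSP product `A n * W z * A (n-1) * W z * ⋯ * W z * A 0`. -/
noncomputable def qspProd {d : ℕ} (W : ℂ → Matrix (Fin d) (Fin d) ℂ) :
    (n : ℕ) → (Fin (n + 1) → Matrix (Fin d) (Fin d) ℂ) → ℂ → Matrix (Fin d) (Fin d) ℂ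
  | 0, A, _ => A 0
  | n + 1, A, z => A (Fin.last (n + 1)) * W z * qspProd W n (fun i => A i.castSucc) z

local notation "𝕔" => starRingEnd ℂ

lemma conj_eval (p : ℂ[X]) (z : ℂ) :
    𝕔 (p.eval z) = (p.map 𝕔).eval (𝕔 z) := by
  rw [Polynomial.eval_map]
  have h := Polynomial.hom_eval₂ p (RingHom.id ℂ) 𝕔 z
  rw [RingHom.comp_id] at h
  exact h

lemma circle_infinite : {z : ℂ | ‖z‖ = 1}.Infinite := by
  have h : Set.InjOn (fun t : ℝ => Complex.exp (t * Complex.I)) (Set.Ioo 0 1) := by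
    intro s hs t ht h
    simp only [Complex.exp_eq_exp_iff_exists_int] at h
    obtain ⟨k, hk⟩ := h
    have hre : s = t + k * (2 * Real.pi) := by
      have h2 : (s : ℂ) * Complex.I = ((t + k * (2*Real.pi) : ℝ) : ℂ) * Complex.I := by
        push_cast; linear_combination hk
      have := mul_right_cancel₀ Complex.I_ne_zero h2
      exact_mod_cast this
    have hpi := Real.pi_gt_three
    have hk0 : (k : ℝ) = 0 := by
      rcases lt_trichotomy k 0 with h' | h' | h'
      · have hk1 : k ≤ -1 := by omega
        have : (k:ℝ) ≤ -1 := by exact_mod_cast hk1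
        nlinarith [hs.1, hs.2, ht.1, ht.2]
      · simp [h']
      · have : (1:ℝ) ≤ k := by exact_mod_cast h'
        nlinarith [hs.1, hs.2, ht.1, ht.2]
    rw [hk0] at hre; simpa using hre
  have h2 := Set.Infinite.image h (Set.Ioo_infinite (show (0:ℝ) < 1 by norm_num))
  apply h2.mono
  rintro z ⟨t, _, rfl⟩
  simp [Complex.norm_exp]

lemma eval_reflect (N : ℕ) (p : ℂ[X]) (hp : p.natDegree ≤ N) {z : ℂ} (hz : z ≠ 0) :
    (reflect N p).eval z = p.eval z⁻¹ * z ^ N := by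
  have : Invertible z⁻¹ := invertibleOfNonzero (inv_ne_zero hz)
  have h := Polynomial.eval₂_reflect_mul_pow (RingHom.id ℂ) z⁻¹ N p hp
  rw [invOf_eq_inv, inv_inv] at h
  have hzN : z ^ N ≠ 0 := pow_ne_zero _ hz
  have h2 := congrArg (· * z ^ N) h
  have e : ∀ (q : ℂ[X]) (w : ℂ), q.eval₂ (RingHom.id ℂ) w = q.eval w := fun _ _ => rfl
  simpa [mul_assoc, inv_pow, inv_mul_cancel₀ hzN, e] using h2

lemma natDegree_reflect_le (N : ℕ) (p : ℂ[X]) (hp : p.natDegree ≤ N) :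
    (reflect N p).natDegree ≤ N := by
  rw [Polynomial.natDegree_le_iff_coeff_eq_zero]
  intro m hm
  rw [Polynomial.coeff_reflect, Polynomial.revAt_eq_self_of_lt hm]
  exact Polynomial.coeff_eq_zero_of_natDegree_lt (lt_of_le_of_lt hp hm)

lemma inv_eq_conj {z : ℂ} (hz : ‖z‖ = 1) : z⁻¹ = 𝕔 z := by
  have h1 : z * 𝕔 z = 1 := by
    rw [Complex.mul_conj]; norm_cast
    rw [← Complex.sq_norm, hz]; norm_num
  have hz0 : z ≠ 0 := by intro h; simp [h] at hz
  field_simp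
  linear_combination -h1

lemma qsp_key_poly (N : ℕ) (P Q : ℂ[X]) (hP : P.natDegree ≤ N) (hQ : Q.natDegree ≤ N)
    (hnorm : ∀ z : ℂ, ‖z‖ = 1 →
      ‖P.eval z‖ ^ 2 + ‖Q.eval z‖ ^ 2 = 1) :
    P * reflect N (P.map 𝕔) + Q * reflect N (Q.map 𝕔) = (X : ℂ[X]) ^ N := by
  apply Polynomial.eq_of_infinite_eval_eq
  apply circle_infinite.mono
  intro z hz
  have hz' : ‖z‖ = 1 := hz
  have hz0 : z ≠ 0 := by intro h; simp [h] at hz'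
  have hPc : (P.map 𝕔).natDegree ≤ N := le_trans (Polynomial.natDegree_map_le) hP
  have hQc : (Q.map 𝕔).natDegree ≤ N := le_trans (Polynomial.natDegree_map_le) hQ
  simp only [Set.mem_setOf_eq, Polynomial.eval_add, Polynomial.eval_mul, Polynomial.eval_pow,
    Polynomial.eval_X]
  rw [eval_reflect N _ hPc hz0, eval_reflect N _ hQc hz0, inv_eq_conj hz', ← conj_eval, ← conj_eval]
  have h1 : P.eval z * 𝕔 (P.eval z) + Q.eval z * 𝕔 (Q.eval z) = 1 := by
    rw [Complex.mul_conj, Complex.mul_conj]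
    norm_cast
    rw [← Complex.sq_norm, ← Complex.sq_norm]
    exact_mod_cast hnorm z hz'
  ring_nf
  ring_nf at h1
  linear_combination z ^ N * h1

lemma qsp_ortho (N : ℕ) (hN : 1 ≤ N) (P Q : ℂ[X]) (hP : P.natDegree ≤ N) (hQ : Q.natDegree ≤ N)
    (hnorm : ∀ z : ℂ, ‖z‖ = 1 →
      ‖P.eval z‖ ^ 2 + ‖Q.eval z‖ ^ 2 = 1) :
    P.coeff N * 𝕔 (P.coeff 0) + Q.coeff N * 𝕔 (Q.coeff 0) = 0 := by
  have h := qsp_key_poly N P Q hP hQ hnorm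
  have h2 := congrArg (fun f => Polynomial.coeff f (N + N)) h
  simp only [Polynomial.coeff_add, Polynomial.coeff_X_pow] at h2
  have hPc : (P.map 𝕔).natDegree ≤ N := le_trans (Polynomial.natDegree_map_le) hP
  have hQc : (Q.map 𝕔).natDegree ≤ N := le_trans (Polynomial.natDegree_map_le) hQ
  rw [Polynomial.coeff_mul_add_eq_of_natDegree_le hP (natDegree_reflect_le N _ hPc),
    Polynomial.coeff_mul_add_eq_of_natDegree_le hQ (natDegree_reflect_le N _ hQc)] at h2
  simp only [Polynomial.coeff_reflect, Polynomial.revAt_le (le_refl N), Nat.sub_self,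
    Polynomial.coeff_map] at h2
  rw [if_neg (by omega)] at h2
  exact h2

lemma su2_mem {a b : ℂ} (h : a * 𝕔 a + b * 𝕔 b = 1) :
    !![a, -𝕔 b; b, 𝕔 a] ∈ Matrix.unitaryGroup (Fin 2) ℂ ∧
      (!![a, -𝕔 b; b, 𝕔 a]).det = 1 := by
  constructor
  · rw [Matrix.mem_unitaryGroup_iff]
    ext i j
    fin_cases i <;> fin_cases j <;>
      simp [Matrix.mul_apply, Fin.sum_univ_two, Matrix.star_eq_conjTranspose,
        Matrix.conjTranspose_apply, Matrix.one_apply] <;> ring_nf <;>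
      linear_combination h
  · simp [Matrix.det_fin_two]
    linear_combination h

lemma W_unitary {z : ℂ} (hz : ‖z‖ = 1) :
    (Matrix.diagonal ![1, z] : Matrix (Fin 2) (Fin 2) ℂ) ∈ Matrix.unitaryGroup (Fin 2) ℂ := by
  rw [Matrix.mem_unitaryGroup_iff']
  have h1 : 𝕔 z * z = 1 := by
    rw [mul_comm, Complex.mul_conj]
    norm_cast
    rw [← Complex.sq_norm, hz]; norm_num
  ext i j
  fin_cases i <;> fin_cases j <;>
    simp [Matrix.star_eq_conjTranspose, Matrix.diagonal_conjTranspose, Matrix.diagonal_mul_diagonal,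
      Matrix.diagonal_apply, Matrix.one_apply, h1]

lemma norm_pres {U : Matrix (Fin 2) (Fin 2) ℂ} (hU : U ∈ Matrix.unitaryGroup (Fin 2) ℂ)
    (v : Fin 2 → ℂ) :
    ‖(U.mulVec v) 0‖ ^ 2 + ‖(U.mulVec v) 1‖ ^ 2 =
      ‖v 0‖ ^ 2 + ‖v 1‖ ^ 2 := by
  have key : star (U.mulVec v) ⬝ᵥ (U.mulVec v) = star v ⬝ᵥ v := by
    rw [Matrix.star_mulVec, dotProduct_mulVec, Matrix.vecMul_vecMul]
    have h1 : Uᴴ * U = 1 := by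
      rw [← Matrix.star_eq_conjTranspose]
      exact Matrix.mem_unitaryGroup_iff'.mp hU
    rw [h1, Matrix.vecMul_one]
  have h2 := congrArg Complex.re key
  simpa [dotProduct, Fin.sum_univ_two, Pi.star_apply, ← Complex.normSq_eq_conj_mul_self,
    Complex.sq_norm] using h2

lemma qspProd_unitary (n : ℕ) (A : Fin (n + 1) → Matrix (Fin 2) (Fin 2) ℂ)
    (hA : ∀ i, A i ∈ Matrix.unitaryGroup (Fin 2) ℂ) {z : ℂ} (hz : ‖z‖ = 1) :
    qspProd (fun z => Matrix.diagonal ![1, z]) n A z ∈ Matrix.unitaryGroup (Fin 2) ℂ := by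
  induction n with
  | zero => exact hA 0
  | succ n ih =>
      exact mul_mem (mul_mem (hA _) (W_unitary hz)) (ih _ fun i => hA _)

lemma step_mulVec (B M : Matrix (Fin 2) (Fin 2) ℂ) (z x y : ℂ) (h : M.mulVec ![1, 0] = ![x, y]) :
    (B * Matrix.diagonal ![1, z] * M).mulVec ![1, 0] =
      ![B 0 0 * x + B 0 1 * (z * y), B 1 0 * x + B 1 1 * (z * y)] := by
  rw [← Matrix.mulVec_mulVec, ← Matrix.mulVec_mulVec, h]
  funext i
  fin_cases i <;>
    simp [Matrix.mulVec, dotProduct, Fin.sum_univ_two, Matrix.diagonal]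

lemma qspProd_poly (n : ℕ) (A : Fin (n + 1) → Matrix (Fin 2) (Fin 2) ℂ) :
    ∃ P Q : ℂ[X], P.natDegree ≤ n ∧ Q.natDegree ≤ n ∧ ∀ z : ℂ,
      (qspProd (fun z => Matrix.diagonal ![1, z]) n A z).mulVec ![1, 0] =
        ![P.eval z, Q.eval z] := by
  induction n with
  | zero =>
      refine ⟨C (A 0 0 0), C (A 0 1 0), by simp, by simp, fun z => ?_⟩
      funext i
      fin_cases i <;> simp [qspProd, Matrix.mulVec, dotProduct, Fin.sum_univ_two]
  | succ n ih =>
      obtain ⟨P, Q, hP, hQ, hev⟩ := ih (fun i => A i.castSucc)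
      set B := A (Fin.last (n + 1)) with hB
      refine ⟨C (B 0 0) * P + C (B 0 1) * (X * Q), C (B 1 0) * P + C (B 1 1) * (X * Q),
        ?_, ?_, fun z => ?_⟩
      · refine le_trans (Polynomial.natDegree_add_le _ _) (max_le ?_ ?_)
        · exact le_trans (Polynomial.natDegree_C_mul_le _ _) (le_trans hP (by omega))
        · refine le_trans (Polynomial.natDegree_C_mul_le _ _) ?_
          refine le_trans (Polynomial.natDegree_mul_le) ?_
          simp only [Polynomial.natDegree_X]
          omega
      · refine le_trans (Polynomial.natDegree_add_le _ _) (max_le ?_ ?_)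
        · exact le_trans (Polynomial.natDegree_C_mul_le _ _) (le_trans hP (by omega))
        · refine le_trans (Polynomial.natDegree_C_mul_le _ _) ?_
          refine le_trans (Polynomial.natDegree_mul_le) ?_
          simp only [Polynomial.natDegree_X]
          omega
      · show (B * Matrix.diagonal ![1, z] * _).mulVec ![1, 0] = _
        rw [step_mulVec B _ z (P.eval z) (Q.eval z) (hev z)]
        simp only [Polynomial.eval_add, Polynomial.eval_mul, Polynomial.eval_C,
          Polynomial.eval_X]

lemma cast_sqrt_sq {s : ℝ} (hs : 0 ≤ s) : ((Real.sqrt s : ℝ) : ℂ) * ((Real.sqrt s : ℝ) : ℂ) = (s : ℂ) := by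
  rw [← Complex.ofReal_mul, Real.mul_self_sqrt hs]

lemma choose_ab (p0 q0 pN qN : ℂ) (horth : pN * 𝕔 p0 + qN * 𝕔 q0 = 0) :
    ∃ a b : ℂ, a * 𝕔 a + b * 𝕔 b = 1 ∧ 𝕔 a * pN + 𝕔 b * qN = 0 ∧ b * p0 = a * q0 := by
  by_cases h0 : p0 = 0 ∧ q0 = 0
  · by_cases hN : pN = 0 ∧ qN = 0
    · exact ⟨1, 0, by simp, by simp [hN.1, hN.2], by simp [h0.1, h0.2]⟩
    · set s : ℝ := Complex.normSq pN + Complex.normSq qN with hs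
      have hs0 : 0 < s := by
        rcases not_and_or.mp hN with h | h
        · have := Complex.normSq_pos.mpr h
          have := Complex.normSq_nonneg qN
          linarith
        · have := Complex.normSq_pos.mpr h
          have := Complex.normSq_nonneg pN
          linarith
      set r : ℂ := ((Real.sqrt s : ℝ) : ℂ) with hrdef
      have hr2 : r * r = (s : ℂ) := cast_sqrt_sq hs0.le
      have hrne : r ≠ 0 := by
        intro h
        rw [h] at hr2
        simp at hr2
        exact hs0.ne' (by exact_mod_cast hr2.symm)
      refine ⟨-𝕔 qN / r, 𝕔 pN / r, ?_, ?_, by simp [h0.1, h0.2]⟩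
      · have hcr : 𝕔 r = r := by
          rw [hrdef, Complex.conj_ofReal]
        have e : ∀ x : ℂ, x / r * 𝕔 (x / r) = x * 𝕔 x / s := by
          intro x; rw [map_div₀, hcr, div_mul_div_comm, hr2]
        rw [e, e, ← add_div, div_eq_one_iff_eq (by exact_mod_cast hs0.ne')]
        rw [hs]
        push_cast
        rw [← Complex.mul_conj, ← Complex.mul_conj]
        simp only [map_neg, Complex.conj_conj]
        ring
      · rw [map_div₀, map_div₀]
        have hcr : 𝕔 r = r := by rw [hrdef, Complex.conj_ofReal]
        rw [hcr]
        simp only [map_neg, Complex.conj_conj]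
        field_simp
        ring
  · set s : ℝ := Complex.normSq p0 + Complex.normSq q0 with hs
    have hs0 : 0 < s := by
      rcases not_and_or.mp h0 with h | h
      · have := Complex.normSq_pos.mpr h
        have := Complex.normSq_nonneg q0
        linarith
      · have := Complex.normSq_pos.mpr h
        have := Complex.normSq_nonneg p0
        linarith
    set r : ℂ := ((Real.sqrt s : ℝ) : ℂ) with hrdef
    have hr2 : r * r = (s : ℂ) := cast_sqrt_sq hs0.le
    have hrne : r ≠ 0 := by
      intro h
      rw [h] at hr2
      simp at hr2
      exact hs0.ne' (by exact_mod_cast hr2.symm)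
    have hcr : 𝕔 r = r := by rw [hrdef, Complex.conj_ofReal]
    refine ⟨p0 / r, q0 / r, ?_, ?_, by field_simp⟩
    · have e : ∀ x : ℂ, x / r * 𝕔 (x / r) = x * 𝕔 x / s := by
        intro x; rw [map_div₀, hcr, div_mul_div_comm, hr2]
      rw [e, e, ← add_div, div_eq_one_iff_eq (by exact_mod_cast hs0.ne')]
      rw [hs]
      push_cast
      rw [← Complex.mul_conj, ← Complex.mul_conj]
    · rw [map_div₀, map_div₀, hcr]
      rw [div_mul_eq_mul_div, div_mul_eq_mul_div, ← add_div, _root_.div_eq_zero_iff]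
      left
      linear_combination horth

lemma unit_cond {p q : ℂ} (h : ‖p‖ ^ 2 + ‖q‖ ^ 2 = 1) :
    p * 𝕔 p + q * 𝕔 q = 1 := by
  rw [Complex.mul_conj, Complex.mul_conj]
  norm_cast
  rw [← Complex.sq_norm, ← Complex.sq_norm]
  exact_mod_cast h

lemma qsp_exists (n : ℕ) : ∀ P Q : ℂ[X], P.natDegree ≤ n → Q.natDegree ≤ n →
    (∀ z : ℂ, ‖z‖ = 1 →
      ‖P.eval z‖ ^ 2 + ‖Q.eval z‖ ^ 2 = 1) →
    ∃ A : Fin (n + 1) → Matrix (Fin 2) (Fin 2) ℂ,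
      (∀ i, A i ∈ Matrix.unitaryGroup (Fin 2) ℂ ∧ (A i).det = 1) ∧
      ∀ z : ℂ, ‖z‖ = 1 →
        (qspProd (fun z => Matrix.diagonal ![1, z]) n A z).mulVec ![1, 0] =
          ![P.eval z, Q.eval z] := by
  induction n with
  | zero =>
      intro P Q hP hQ hnorm
      have hPc : P = C (P.coeff 0) := Polynomial.eq_C_of_natDegree_le_zero hP
      have hQc : Q = C (Q.coeff 0) := Polynomial.eq_C_of_natDegree_le_zero hQ
      have h1 : P.coeff 0 * 𝕔 (P.coeff 0) + Q.coeff 0 * 𝕔 (Q.coeff 0) = 1 := by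
        apply unit_cond
        have := hnorm 1 (by simp)
        rw [hPc, hQc] at this
        simpa using this
      obtain ⟨hU, hdet⟩ := su2_mem h1
      refine ⟨fun _ => !![P.coeff 0, -𝕔 (Q.coeff 0); Q.coeff 0, 𝕔 (P.coeff 0)],
        fun i => ⟨hU, hdet⟩, fun z hz => ?_⟩
      show (!![P.coeff 0, -𝕔 (Q.coeff 0); Q.coeff 0, 𝕔 (P.coeff 0)]).mulVec ![1, 0] = _
      funext i
      fin_cases i <;>
        · conv_rhs => rw [hPc, hQc]
          simp [Matrix.mulVec, dotProduct, Fin.sum_univ_two]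
  | succ n ih =>
      intro P Q hP hQ hnorm
      have horth := qsp_ortho (n + 1) (by omega) P Q hP hQ hnorm
      obtain ⟨a, b, hab, h1, h2⟩ :=
        choose_ab (P.coeff 0) (Q.coeff 0) (P.coeff (n + 1)) (Q.coeff (n + 1)) horth
      set S : ℂ[X] := C (𝕔 a) * P + C (𝕔 b) * Q with hSdef
      set T : ℂ[X] := C (-b) * P + C a * Q with hTdef
      have hT0 : T.coeff 0 = 0 := by
        rw [hTdef]
        simp only [Polynomial.coeff_add, Polynomial.coeff_C_mul]
        linear_combination -h2
      have hTX : X * T.divX = T := by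
        conv_rhs => rw [← Polynomial.X_mul_divX_add T]
        rw [hT0, map_zero, add_zero]
      have hTdeg : T.natDegree ≤ n + 1 := by
        rw [hTdef]
        refine le_trans (Polynomial.natDegree_add_le _ _) (max_le ?_ ?_)
        · exact le_trans (Polynomial.natDegree_C_mul_le _ _) hP
        · exact le_trans (Polynomial.natDegree_C_mul_le _ _) hQ
      have hT'deg : T.divX.natDegree ≤ n := by
        rw [Polynomial.natDegree_divX_eq_natDegree_tsub_one]
        omega
      have hSdeg : S.natDegree ≤ n := by
        rw [Polynomial.natDegree_le_iff_coeff_eq_zero]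
        intro m hm
        rw [hSdef]
        simp only [Polynomial.coeff_add, Polynomial.coeff_C_mul]
        rcases eq_or_lt_of_le (Nat.succ_le_of_lt hm) with hm' | hm'
        · rw [← hm']
          exact h1
        · rw [Polynomial.coeff_eq_zero_of_natDegree_lt (lt_of_le_of_lt hP hm'),
            Polynomial.coeff_eq_zero_of_natDegree_lt (lt_of_le_of_lt hQ hm')]
          ring
      obtain ⟨hUmem, hUdet⟩ := su2_mem hab
      have hstar : ∀ z : ℂ,
          (star (!![a, -𝕔 b; b, 𝕔 a])).mulVec ![P.eval z, Q.eval z] =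
            ![S.eval z, T.eval z] := by
        intro z
        funext i
        rw [hSdef, hTdef]
        fin_cases i <;>
          simp [Matrix.star_eq_conjTranspose, Matrix.mulVec, dotProduct,
            Fin.sum_univ_two, Matrix.conjTranspose_apply] <;> ring
      have hTz : ∀ z : ℂ, T.eval z = z * T.divX.eval z := by
        intro z
        conv_lhs => rw [← hTX]
        simp
      have hnorm' : ∀ z : ℂ, ‖z‖ = 1 →
          ‖S.eval z‖ ^ 2 + ‖T.divX.eval z‖ ^ 2 = 1 := by
        intro z hz
        have h3 := norm_pres (Unitary.star_mem hUmem) ![P.eval z, Q.eval z]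
        rw [hstar z] at h3
        simp only [Matrix.cons_val_zero, Matrix.cons_val_one, Matrix.head_cons] at h3
        rw [hnorm z hz] at h3
        rw [hTz z, norm_mul, hz, one_mul] at h3
        exact h3
      obtain ⟨A', hA', hev'⟩ := ih S T.divX hSdeg hT'deg hnorm'
      set AA : Fin (n + 2) → Matrix (Fin 2) (Fin 2) ℂ :=
        Fin.snoc A' !![a, -𝕔 b; b, 𝕔 a] with hAA
      refine ⟨AA, ?_, ?_⟩
      · intro i
        refine Fin.lastCases ?_ (fun j => ?_) i
        · rw [hAA, Fin.snoc_last]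
          exact ⟨hUmem, hUdet⟩
        · rw [hAA, Fin.snoc_castSucc]
          exact hA' j
      · intro z hz
        have e1 : (fun i : Fin (n + 1) => AA i.castSucc) = A' := by
          funext i
          rw [hAA, Fin.snoc_castSucc]
        have e2 : AA (Fin.last (n + 1)) = !![a, -𝕔 b; b, 𝕔 a] := by
          rw [hAA, Fin.snoc_last]
        show (AA (Fin.last (n + 1)) * Matrix.diagonal ![1, z] *
          qspProd _ n (fun i => AA i.castSucc) z).mulVec ![1, 0] = _
        rw [e1, e2,
          step_mulVec _ _ z (S.eval z) (T.divX.eval z) (hev' z hz)]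
        funext i
        have hSz : S.eval z = 𝕔 a * P.eval z + 𝕔 b * Q.eval z := by rw [hSdef]; simp
        have hTz' : z * T.divX.eval z = -b * P.eval z + a * Q.eval z := by
          rw [← hTz z, hTdef]; simp
        fin_cases i <;>
          · rw [hSz, hTz']
            simp only [Matrix.cons_val_zero, Matrix.cons_val_one, Matrix.head_cons,
              Matrix.cons_val', Matrix.cons_val_fin_one, Matrix.empty_val',
              Matrix.head_fin_const, Matrix.of_apply, Fin.mk_zero, Fin.mk_one, Fin.isValue]
            first
            | linear_combination P.eval z * hab
            | linear_combination Q.eval z * hab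

theorem single_qubit_qsp_analytic (n : ℕ) (P Q : Polynomial ℂ) :
    (∃ A : Fin (n + 1) → Matrix (Fin 2) (Fin 2) ℂ,
        (∀ i, A i ∈ Matrix.unitaryGroup (Fin 2) ℂ ∧ (A i).det = 1) ∧
        (∀ z : ℂ, ‖z‖ = 1 →
          (qspProd (fun z => Matrix.diagonal ![1, z]) n A z).mulVec ![1, 0] =
            ![P.eval z, Q.eval z])) ↔
      (P.natDegree ≤ n ∧ Q.natDegree ≤ n ∧
        ∀ z : ℂ, ‖z‖ = 1 →
          ‖P.eval z‖ ^ 2 + ‖Q.eval z‖ ^ 2 = 1) := by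
  constructor
  · rintro ⟨A, hA, hev⟩
    obtain ⟨P', Q', hP', hQ', hev'⟩ := qspProd_poly n A
    have hagree : ∀ z : ℂ, ‖z‖ = 1 →
        P.eval z = P'.eval z ∧ Q.eval z = Q'.eval z := by
      intro z hz
      have h1 := (hev z hz).symm.trans (hev' z)
      exact ⟨congrFun h1 0, congrFun h1 1⟩
    have hPP : P = P' := by
      apply Polynomial.eq_of_infinite_eval_eq
      exact circle_infinite.mono fun z hz => (hagree z hz).1
    have hQQ : Q = Q' := by
      apply Polynomial.eq_of_infinite_eval_eq
      exact circle_infinite.mono fun z hz => (hagree z hz).2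
    refine ⟨hPP ▸ hP', hQQ ▸ hQ', fun z hz => ?_⟩
    have hU := qspProd_unitary n A (fun i => (hA i).1) hz
    have h2 := norm_pres hU ![1, 0]
    rw [hev z hz] at h2
    simpa using h2
  · rintro ⟨hP, hQ, hnorm⟩
    exact qsp_exists n P Q hP hQ hnorm
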